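/- arXiv:math/0505127 — 2 statements merged into one kernel-verified Lean document; each statement's English description precedes it below -/
import Mathlib

section
/- Assume the mean interarrival time is finite, 0 < ∫_0^∞ x dA(x) < ∞. Then lim_{n→∞} [ Σ_{l=1}^n l r_{0,m,l} + Σ_{k=1}^{m−1} (n+k) r_{k,m−k,n} ] = Σ_{l=1}^∞ l r_{0,m,l} = mμ/λ = 1/ϱ (for m = 1 the second sum is empty). -/
open MeasureTheory Filter Topology


lemma hasSum_exp_div (z : ℝ) : HasSum (fun l : ℕ => z ^ l / (Nat.factorial l)) (Real.exp z) := by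
  rw [Real.exp_eq_exp_ℝ]
  exact NormedSpace.expSeries_div_hasSum_exp z

lemma hasSum_g (z : ℝ) : HasSum (fun l : ℕ => Real.exp (-z) * z ^ l / (Nat.factorial l)) 1 := by
  have h := (hasSum_exp_div z).mul_left (Real.exp (-z))
  have e1 : Real.exp (-z) * Real.exp z = 1 := by rw [← Real.exp_add]; simp
  simpa [e1, mul_div_assoc] using h

lemma hasSum_lz (z : ℝ) :
    HasSum (fun l : ℕ => (l : ℝ) * z ^ l / (Nat.factorial l)) (z * Real.exp z) := by
  have h := (hasSum_exp_div z).mul_left z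
  have hfun : (fun l : ℕ => ((l + 1 : ℕ) : ℝ) * z ^ (l + 1) / (Nat.factorial (l + 1)))
      = fun l : ℕ => z * (z ^ l / (Nat.factorial l)) := by
    funext l
    have hl : ((Nat.factorial l : ℝ)) ≠ 0 := Nat.cast_ne_zero.2 (Nat.factorial_ne_zero l)
    rw [Nat.factorial_succ]
    push_cast
    rw [pow_succ]
    field_simp
  have h1 : HasSum (fun l : ℕ => ((l + 1 : ℕ) : ℝ) * z ^ (l + 1) / (Nat.factorial (l + 1)))
      (z * Real.exp z) := hfun ▸ h
  have h2 := (hasSum_nat_add_iff (f := fun l : ℕ => (l : ℝ) * z ^ l / (Nat.factorial l)) 1).mp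
    (by simpa using h1)
  simpa using h2

lemma hasSum_F (z : ℝ) :
    HasSum (fun l : ℕ => (l : ℝ) * (Real.exp (-z) * z ^ l / (Nat.factorial l))) z := by
  have h := (hasSum_lz z).mul_left (Real.exp (-z))
  have e1 : Real.exp (-z) * Real.exp z = 1 := by rw [← Real.exp_add]; simp
  rw [show Real.exp (-z) * (z * Real.exp z) = z by
    rw [mul_comm z, ← mul_assoc, e1, one_mul]] at h
  refine h.congr_fun fun l => ?_
  ring

lemma hasDerivAt_phi (c : ℝ) (j : ℕ) (t : ℝ) :
    HasDerivAt (fun t => ∑ i ∈ Finset.range (j + 1),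
        Real.exp (-(c * t)) * (c * t) ^ i / (Nat.factorial i))
      (-(Real.exp (-(c * t)) * (c * t) ^ j / (Nat.factorial j) * c)) t := by
  induction j with
  | zero =>
      have hlin : HasDerivAt (fun t : ℝ => -(c * t)) (-c) t := by
        simpa using ((hasDerivAt_id t).const_mul c).fun_neg
      have h := hlin.exp
      simp only [Finset.range_one, Finset.sum_singleton, pow_zero, Nat.factorial_zero,
        Nat.cast_one, div_one, mul_one]
      simpa [mul_neg] using h
  | succ j ih =>
      have hlin : HasDerivAt (fun t : ℝ => -(c * t)) (-c) t := by
        simpa using ((hasDerivAt_id t).const_mul c).fun_neg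
      have hexp : HasDerivAt (fun t : ℝ => Real.exp (-(c * t))) (Real.exp (-(c * t)) * (-c)) t :=
        hlin.exp
      have hpow : HasDerivAt (fun t : ℝ => (c * t) ^ (j + 1))
          (((j : ℝ) + 1) * (c * t) ^ j * c) t := by
        have := ((hasDerivAt_id t).const_mul c).fun_pow (j + 1)
        simpa using this
      have hterm : HasDerivAt
          (fun t : ℝ => Real.exp (-(c * t)) * (c * t) ^ (j + 1) / (Nat.factorial (j + 1)))
          ((Real.exp (-(c * t)) * (-c) * (c * t) ^ (j + 1)
            + Real.exp (-(c * t)) * (((j : ℝ) + 1) * (c * t) ^ j * c)) / (Nat.factorial (j + 1))) t :=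
        (hexp.mul hpow).div_const _
      have h := ih.add hterm
      have heq : (fun t => ∑ i ∈ Finset.range (j + 1 + 1),
          Real.exp (-(c * t)) * (c * t) ^ i / (Nat.factorial i))
        = fun t => (∑ i ∈ Finset.range (j + 1),
            Real.exp (-(c * t)) * (c * t) ^ i / (Nat.factorial i))
          + Real.exp (-(c * t)) * (c * t) ^ (j + 1) / (Nat.factorial (j + 1)) := by
        funext t; rw [Finset.sum_range_succ]
      rw [heq]
      refine h.congr_deriv ?_
      have hj : ((Nat.factorial j : ℝ)) ≠ 0 := Nat.cast_ne_zero.2 (Nat.factorial_ne_zero j)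
      have hj1 : ((Nat.factorial (j + 1) : ℝ)) ≠ 0 := Nat.cast_ne_zero.2 (Nat.factorial_ne_zero (j + 1))
      rw [Nat.factorial_succ]
      push_cast
      field_simp
      ring

lemma erlang_eq (c x : ℝ) (j : ℕ) :
    ∫ u in (0:ℝ)..x, Real.exp (-(c * u)) * (c * u) ^ j / (Nat.factorial j) * c
      = 1 - ∑ i ∈ Finset.range (j + 1), Real.exp (-(c * x)) * (c * x) ^ i / (Nat.factorial i) := by
  have hcont : Continuous (fun u : ℝ =>
      -(Real.exp (-(c * u)) * (c * u) ^ j / (Nat.factorial j) * c)) := by fun_prop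
  have hftc := intervalIntegral.integral_eq_sub_of_hasDerivAt
    (f := fun t => ∑ i ∈ Finset.range (j + 1),
      Real.exp (-(c * t)) * (c * t) ^ i / (Nat.factorial i))
    (f' := fun u => -(Real.exp (-(c * u)) * (c * u) ^ j / (Nat.factorial j) * c))
    (fun t _ => hasDerivAt_phi c j t) (hcont.intervalIntegrable 0 x)
  have hneg : ∫ u in (0:ℝ)..x, Real.exp (-(c * u)) * (c * u) ^ j / (Nat.factorial j) * c
      = -(∫ u in (0:ℝ)..x, -(Real.exp (-(c * u)) * (c * u) ^ j / (Nat.factorial j) * c)) := by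
    rw [intervalIntegral.integral_neg]; ring
  have hΦ0 : ∑ i ∈ Finset.range (j + 1),
      Real.exp (-(c * 0)) * (c * 0) ^ i / (Nat.factorial i) = 1 := by
    rw [Finset.sum_eq_single 0]
    · simp
    · intro i _ hi
      simp [zero_pow hi]
    · intro h
      exact absurd (Finset.mem_range.2 (Nat.succ_pos j)) h
  rw [hneg, hftc]
  beta_reduce
  rw [hΦ0]
  ring

lemma aux_key (c : ℝ) (hc : 0 ≤ c) (A : Measure ℝ) [IsProbabilityMeasure A]
    (h0 : ∀ᵐ x ∂A, 0 ≤ x) (hintA : Integrable (fun x => x) A) :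
    ∑' l : ℕ, ∫⁻ x, ‖(l : ℝ) * (Real.exp (-(c * x)) * (c * x) ^ l / (Nat.factorial l))‖₊ ∂A
      = ENNReal.ofReal (c * ∫ x, x ∂A) := by
  have hFnn : ∀ (l : ℕ) (x : ℝ), 0 ≤ x →
      0 ≤ (l : ℝ) * (Real.exp (-(c * x)) * (c * x) ^ l / (Nat.factorial l)) := by
    intro l x hx
    have h1 : 0 ≤ c * x := mul_nonneg hc hx
    positivity
  have step1 : ∀ l : ℕ, ∫⁻ x, ‖(l : ℝ) * (Real.exp (-(c * x)) * (c * x) ^ l / (Nat.factorial l))‖₊ ∂A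
      = ∫⁻ x, ENNReal.ofReal ((l : ℝ) * (Real.exp (-(c * x)) * (c * x) ^ l / (Nat.factorial l))) ∂A := by
    intro l
    refine lintegral_congr_ae (h0.mono fun x hx => ?_)
    exact Real.enorm_eq_ofReal (hFnn l x hx)
  have hmeas : ∀ l : ℕ, AEMeasurable (fun x : ℝ =>
      ENNReal.ofReal ((l : ℝ) * (Real.exp (-(c * x)) * (c * x) ^ l / (Nat.factorial l)))) A := by
    intro l
    have : Continuous (fun x : ℝ => (l : ℝ) * (Real.exp (-(c * x)) * (c * x) ^ l / (Nat.factorial l))) := by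
      fun_prop
    exact (this.measurable.ennreal_ofReal).aemeasurable
  simp only [step1]
  rw [← lintegral_tsum hmeas]
  have step2 : ∫⁻ x, ∑' l : ℕ,
      ENNReal.ofReal ((l : ℝ) * (Real.exp (-(c * x)) * (c * x) ^ l / (Nat.factorial l))) ∂A
      = ∫⁻ x, ENNReal.ofReal (c * x) ∂A := by
    refine lintegral_congr_ae (h0.mono fun x hx => ?_)
    beta_reduce
    rw [← ENNReal.ofReal_tsum_of_nonneg (fun l => hFnn l x hx) (hasSum_F (c * x)).summable,
      (hasSum_F (c * x)).tsum_eq]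
  rw [step2, ← ofReal_integral_eq_lintegral_ofReal (hintA.const_mul c)
    (h0.mono fun x hx => mul_nonneg hc hx), integral_const_mul]

set_option maxHeartbeats 2000000 in
/-- Relations (5.2)–(5.3): if the mean interarrival time is finite and positive, then
`Σ_{l=1}^n l r_{0,m,l} + Σ_{k=1}^{m-1} (n+k) r_{k,m-k,n} → Σ_{l=1}^∞ l r_{0,m,l} = mμ/λ = 1/ϱ`
as `n → ∞`. -/
theorem gamma1_limit
    (m : ℕ) (hm : 1 ≤ m) (μ : ℝ) (hμ : 0 < μ)
    (A : Measure ℝ) [IsProbabilityMeasure A]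
    (hsupp : A {x | x < 0} = 0)
    (hint : Integrable (fun x => x) A)
    (hmean : 0 < ∫ x, x ∂A) :
    Summable (fun l : ℕ => (l : ℝ) *
      ∫ x, Real.exp (-(m * μ * x)) * (m * μ * x) ^ l / (Nat.factorial l) ∂A) ∧
    (∑' l : ℕ, (l : ℝ) *
      ∫ x, Real.exp (-(m * μ * x)) * (m * μ * x) ^ l / (Nat.factorial l) ∂A)
      = m * μ * ∫ x, x ∂A ∧
    m * μ * ∫ x, x ∂A = ((∫ x, x ∂A)⁻¹ / (m * μ))⁻¹ ∧
    Tendsto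
      (fun n : ℕ =>
        (∑ l ∈ Finset.Icc 1 n, (l : ℝ) *
          ∫ x, Real.exp (-(m * μ * x)) * (m * μ * x) ^ l / (Nat.factorial l) ∂A) +
        ∑ k ∈ Finset.Icc 1 (m - 1), ((n : ℝ) + k) *
          ((m.choose k : ℝ) *
            ∫ x, Real.exp (-(((m : ℝ) - k) * μ * x)) *
              (∫ u in (0 : ℝ)..x,
                (m * μ * u) ^ (n - 1) / (Nat.factorial (n - 1)) *
                  (Real.exp (-(μ * u)) - Real.exp (-(μ * x))) ^ k * (m * μ)) ∂A))
      atTop (𝓝 (m * μ * ∫ x, x ∂A)) := by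
  have hm' : (1 : ℝ) ≤ (m : ℝ) := by exact_mod_cast hm
  have hc : (0 : ℝ) < (m : ℝ) * μ := mul_pos (lt_of_lt_of_le one_pos hm') hμ
  set c : ℝ := (m : ℝ) * μ with hcdef
  have h0 : ∀ᵐ x ∂A, 0 ≤ x := by
    rw [ae_iff]
    convert hsupp using 2
    ext x; simp [not_le]
  set F : ℕ → ℝ → ℝ :=
    fun l x => (l : ℝ) * (Real.exp (-(c * x)) * (c * x) ^ l / (Nat.factorial l)) with hFdef
  have hFcont : ∀ l, Continuous (F l) := fun l => by simp only [hFdef]; fun_prop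
  have hFnn : ∀ (l : ℕ) (x : ℝ), 0 ≤ x → 0 ≤ F l x := by
    intro l x hx
    have h1 : 0 ≤ c * x := mul_nonneg hc.le hx
    simp only [hFdef]
    positivity
  have key : ∑' l : ℕ, ∫⁻ x, ‖F l x‖₊ ∂A = ENNReal.ofReal (c * ∫ x, x ∂A) :=
    aux_key c hc.le A h0 hint
  have keyne : ∑' l : ℕ, ∫⁻ x, ‖F l x‖₊ ∂A ≠ ⊤ := by rw [key]; exact ENNReal.ofReal_ne_top
  have hFint : ∀ l, Integrable (F l) A := fun l =>
    ⟨(hFcont l).aestronglyMeasurable,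
      (ENNReal.le_tsum l).trans_lt (lt_top_iff_ne_top.2 keyne)⟩
  have hsummable : Summable (fun l : ℕ => ∫ x, F l x ∂A) := by
    have h1 := ENNReal.summable_toReal keyne
    refine h1.congr fun l => ?_
    rw [integral_eq_lintegral_of_nonneg_ae (h0.mono fun x hx => hFnn l x hx)
      (hFcont l).aestronglyMeasurable]
    congr 1
    refine lintegral_congr_ae (h0.mono fun x hx => ?_)
    exact Real.enorm_eq_ofReal (hFnn l x hx)
  have htsum : ∑' l : ℕ, ∫ x, F l x ∂A = c * ∫ x, x ∂A := by
    rw [← MeasureTheory.integral_tsum (fun l => (hFcont l).aestronglyMeasurable) keyne]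
    have hpt : ∀ x : ℝ, ∑' l : ℕ, F l x = c * x := fun x => (hasSum_F (c * x)).tsum_eq
    rw [show (fun x => ∑' l : ℕ, F l x) = fun x : ℝ => c * x from funext hpt]
    exact integral_const_mul c _
  have hswap : ∀ l : ℕ,
      (l : ℝ) * ∫ x, Real.exp (-(c * x)) * (c * x) ^ l / (Nat.factorial l) ∂A
        = ∫ x, F l x ∂A := fun l => (integral_const_mul _ _).symm
  refine ⟨hsummable.congr fun l => (hswap l).symm, by rw [tsum_congr hswap, htsum], ?_, ?_⟩
  · rw [div_eq_mul_inv, mul_inv, inv_inv, inv_inv, mul_comm]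
  -- the limit statement
  have h4a : Tendsto (fun n => ∑ l ∈ Finset.range n, ∫ x, F l x ∂A) atTop
      (𝓝 (c * ∫ x, x ∂A)) := by
    simpa [htsum] using hsummable.hasSum.tendsto_sum_nat
  have hpartial : Tendsto (fun n : ℕ => ∑ l ∈ Finset.Icc 1 n, (l : ℝ) *
      ∫ x, Real.exp (-(c * x)) * (c * x) ^ l / (Nat.factorial l) ∂A) atTop
      (𝓝 (c * ∫ x, x ∂A)) := by
    have hs : ∀ n : ℕ, (∑ l ∈ Finset.Icc 1 n, (l : ℝ) *
        ∫ x, Real.exp (-(c * x)) * (c * x) ^ l / (Nat.factorial l) ∂A)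
        = ∑ l ∈ Finset.range (n + 1), ∫ x, F l x ∂A := by
      intro n
      induction n with
      | zero => simp [hFdef]
      | succ n ihn =>
          rw [Finset.sum_Icc_succ_top (by omega : 1 ≤ n + 1), ihn, hswap (n + 1),
            ← Finset.sum_range_succ]
    simp only [hs]
    exact h4a.comp (tendsto_add_atTop_nat 1)
  have hBint : ∀ n : ℕ, Integrable (fun x => c * x - ∑ l ∈ Finset.range n, F l x) A :=
    fun n => (hint.const_mul c).sub (integrable_finset_sum _ fun l _ => hFint l)
  have hBval : ∀ n : ℕ, ∫ x, (c * x - ∑ l ∈ Finset.range n, F l x) ∂A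
      = c * (∫ x, x ∂A) - ∑ l ∈ Finset.range n, ∫ x, F l x ∂A := by
    intro n
    rw [integral_sub (hint.const_mul c) (integrable_finset_sum _ fun l _ => hFint l),
      integral_finset_sum _ (fun l _ => hFint l), integral_const_mul]
  have hBlim : Tendsto (fun n => ∫ x, (c * x - ∑ l ∈ Finset.range n, F l x) ∂A) atTop
      (𝓝 0) := by
    simp only [hBval]
    simpa using (tendsto_const_nhds (x := c * ∫ x, x ∂A)).sub h4a
  have hksum : Tendsto (fun n : ℕ => ∑ k ∈ Finset.Icc 1 (m - 1), ((n : ℝ) + k) *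
      ((m.choose k : ℝ) *
        ∫ x, Real.exp (-(((m : ℝ) - k) * μ * x)) *
          (∫ u in (0 : ℝ)..x,
            (c * u) ^ (n - 1) / (Nat.factorial (n - 1)) *
              (Real.exp (-(μ * u)) - Real.exp (-(μ * x))) ^ k * c) ∂A)) atTop
      (𝓝 (∑ k ∈ Finset.Icc 1 (m - 1), (0 : ℝ))) := by
    refine tendsto_finset_sum _ fun k hk => ?_
    obtain ⟨hk1, hk2⟩ := Finset.mem_Icc.mp hk
    have hkm : (k : ℝ) + 1 ≤ (m : ℝ) := by exact_mod_cast (by omega : k + 1 ≤ m)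
    have hmk : (0 : ℝ) ≤ ((m : ℝ) - k) * μ := by nlinarith [hμ.le]
    -- nonnegativity of the inner interval integrand
    have hInn : ∀ (n : ℕ) (x : ℝ), 0 ≤ x → ∀ u ∈ Set.Icc (0:ℝ) x,
        0 ≤ (c * u) ^ (n - 1) / (Nat.factorial (n - 1)) *
          (Real.exp (-(μ * u)) - Real.exp (-(μ * x))) ^ k * c := by
      intro n x hx u hu
      have hu0 : 0 ≤ u := hu.1
      have hcu : 0 ≤ c * u := mul_nonneg hc.le hu0
      have hD : 0 ≤ Real.exp (-(μ * u)) - Real.exp (-(μ * x)) := by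
        have : -(μ * x) ≤ -(μ * u) := by nlinarith [hu.2]
        exact sub_nonneg.2 (Real.exp_le_exp.2 this)
      positivity
    have hWnn : ∀ n : ℕ, ∀ᵐ x ∂A, 0 ≤ Real.exp (-(((m : ℝ) - k) * μ * x)) *
        (∫ u in (0 : ℝ)..x,
          (c * u) ^ (n - 1) / (Nat.factorial (n - 1)) *
            (Real.exp (-(μ * u)) - Real.exp (-(μ * x))) ^ k * c) := by
      intro n
      refine h0.mono fun x hx => ?_
      have hI : 0 ≤ ∫ u in (0 : ℝ)..x,
          (c * u) ^ (n - 1) / (Nat.factorial (n - 1)) *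
            (Real.exp (-(μ * u)) - Real.exp (-(μ * x))) ^ k * c :=
        intervalIntegral.integral_nonneg hx (hInn n x hx)
      positivity
    refine squeeze_zero' (g := fun n : ℕ => (m.choose k : ℝ) *
      ((1 + (k : ℝ)) * ∫ x, (c * x - ∑ l ∈ Finset.range n, F l x) ∂A)) ?_ ?_ ?_
    · refine Eventually.of_forall fun n => ?_
      have h1 : 0 ≤ ∫ x, Real.exp (-(((m : ℝ) - k) * μ * x)) *
          (∫ u in (0 : ℝ)..x,
            (c * u) ^ (n - 1) / (Nat.factorial (n - 1)) *
              (Real.exp (-(μ * u)) - Real.exp (-(μ * x))) ^ k * c) ∂A :=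
        integral_nonneg_of_ae (hWnn n)
      positivity
    · -- the squeeze upper bound, for n ≥ 1
      filter_upwards [eventually_ge_atTop 1] with n hn
      obtain ⟨j, rfl⟩ : ∃ j, n = j + 1 := ⟨n - 1, by omega⟩
      simp only [Nat.add_sub_cancel]
      -- pointwise bound
      have hpt : ∀ᵐ x ∂A, (((j + 1 : ℕ) : ℝ) + k) *
          (Real.exp (-(((m : ℝ) - k) * μ * x)) *
            (∫ u in (0 : ℝ)..x,
              (c * u) ^ j / (Nat.factorial j) *
                (Real.exp (-(μ * u)) - Real.exp (-(μ * x))) ^ k * c))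
          ≤ (1 + (k : ℝ)) * (c * x - ∑ l ∈ Finset.range (j + 1), F l x) := by
        refine h0.mono fun x hx => ?_
        have hstepA : Real.exp (-(((m : ℝ) - k) * μ * x)) *
            (∫ u in (0 : ℝ)..x,
              (c * u) ^ j / (Nat.factorial j) *
                (Real.exp (-(μ * u)) - Real.exp (-(μ * x))) ^ k * c)
            ≤ ∫ u in (0 : ℝ)..x, Real.exp (-(c * u)) * (c * u) ^ j / (Nat.factorial j) * c := by
          rw [← intervalIntegral.integral_const_mul]
          refine intervalIntegral.integral_mono_on hx ?_ ?_ ?_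
          · exact (Continuous.intervalIntegrable (by fun_prop) 0 x)
          · exact (Continuous.intervalIntegrable (by fun_prop) 0 x)
          · intro u hu
            have hu0 : 0 ≤ u := hu.1
            have hux : u ≤ x := hu.2
            have hD0 : 0 ≤ Real.exp (-(μ * u)) - Real.exp (-(μ * x)) := by
              have : -(μ * x) ≤ -(μ * u) := by nlinarith
              exact sub_nonneg.2 (Real.exp_le_exp.2 this)
            have hDk : (Real.exp (-(μ * u)) - Real.exp (-(μ * x))) ^ k
                ≤ Real.exp (-(μ * u)) ^ k :=
              pow_le_pow_left₀ hD0 (sub_le_self _ (Real.exp_pos _).le) k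
            have hE : Real.exp (-(((m : ℝ) - k) * μ * x))
                ≤ Real.exp (-(((m : ℝ) - k) * μ * u)) := by
              refine Real.exp_le_exp.2 ?_
              nlinarith
            have hmain : Real.exp (-(((m : ℝ) - k) * μ * x)) *
                (Real.exp (-(μ * u)) - Real.exp (-(μ * x))) ^ k ≤ Real.exp (-(c * u)) := by
              calc Real.exp (-(((m : ℝ) - k) * μ * x)) *
                    (Real.exp (-(μ * u)) - Real.exp (-(μ * x))) ^ k
                  ≤ Real.exp (-(((m : ℝ) - k) * μ * u)) * Real.exp (-(μ * u)) ^ k :=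
                    mul_le_mul hE hDk (pow_nonneg hD0 k) (Real.exp_pos _).le
                _ = Real.exp (-(c * u)) := by
                    rw [← Real.exp_nat_mul, ← Real.exp_add]
                    congr 1
                    rw [hcdef]
                    ring
            have hP : 0 ≤ (c * u) ^ j / (Nat.factorial j) * c := by
              have : 0 ≤ c * u := mul_nonneg hc.le hu0
              positivity
            calc Real.exp (-(((m : ℝ) - k) * μ * x)) *
                  ((c * u) ^ j / (Nat.factorial j) *
                    (Real.exp (-(μ * u)) - Real.exp (-(μ * x))) ^ k * c)
                = (Real.exp (-(((m : ℝ) - k) * μ * x)) *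
                    (Real.exp (-(μ * u)) - Real.exp (-(μ * x))) ^ k) *
                  ((c * u) ^ j / (Nat.factorial j) * c) := by ring
              _ ≤ Real.exp (-(c * u)) * ((c * u) ^ j / (Nat.factorial j) * c) :=
                  mul_le_mul_of_nonneg_right hmain hP
              _ = Real.exp (-(c * u)) * (c * u) ^ j / (Nat.factorial j) * c := by ring
        have herl : (∫ u in (0 : ℝ)..x, Real.exp (-(c * u)) * (c * u) ^ j / (Nat.factorial j) * c)
            = 1 - ∑ i ∈ Finset.range (j + 1),
                Real.exp (-(c * x)) * (c * x) ^ i / (Nat.factorial i) := erlang_eq c x j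
        have hR : HasSum (fun i : ℕ =>
            Real.exp (-(c * x)) * (c * x) ^ (i + (j + 1)) / (Nat.factorial (i + (j + 1))))
            (1 - ∑ i ∈ Finset.range (j + 1),
              Real.exp (-(c * x)) * (c * x) ^ i / (Nat.factorial i)) :=
          (hasSum_nat_add_iff (f := fun i : ℕ =>
            Real.exp (-(c * x)) * (c * x) ^ i / (Nat.factorial i)) (j + 1)).mpr
            (by simpa using hasSum_g (c * x))
        have hB2 : HasSum (fun i : ℕ => F (i + (j + 1)) x)
            (c * x - ∑ l ∈ Finset.range (j + 1), F l x) := by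
          simp only [hFdef]
          exact (hasSum_nat_add_iff (f := fun l : ℕ =>
            (l : ℝ) * (Real.exp (-(c * x)) * (c * x) ^ l / (Nat.factorial l))) (j + 1)).mpr
            (by simpa using hasSum_F (c * x))
        have htail : (((j + 1 : ℕ) : ℝ) + k) *
            (1 - ∑ i ∈ Finset.range (j + 1),
              Real.exp (-(c * x)) * (c * x) ^ i / (Nat.factorial i))
            ≤ (1 + (k : ℝ)) * (c * x - ∑ l ∈ Finset.range (j + 1), F l x) := by
          refine hasSum_le ?_ (hR.mul_left _) (hB2.mul_left _)
          intro i
          simp only [hFdef]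
          have hg : 0 ≤ Real.exp (-(c * x)) * (c * x) ^ (i + (j + 1)) /
              (Nat.factorial (i + (j + 1))) := by
            have : 0 ≤ c * x := mul_nonneg hc.le hx
            positivity
          have hco : (((j + 1 : ℕ) : ℝ) + k) ≤ (1 + (k : ℝ)) * ((i + (j + 1) : ℕ) : ℝ) := by
            push_cast
            nlinarith [Nat.cast_nonneg (α := ℝ) i, Nat.cast_nonneg (α := ℝ) j,
              Nat.cast_nonneg (α := ℝ) k]
          calc (((j + 1 : ℕ) : ℝ) + k) *
                (Real.exp (-(c * x)) * (c * x) ^ (i + (j + 1)) / (Nat.factorial (i + (j + 1))))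
              ≤ ((1 + (k : ℝ)) * ((i + (j + 1) : ℕ) : ℝ)) *
                (Real.exp (-(c * x)) * (c * x) ^ (i + (j + 1)) / (Nat.factorial (i + (j + 1)))) :=
                mul_le_mul_of_nonneg_right hco hg
            _ = (1 + (k : ℝ)) * (((i + (j + 1) : ℕ) : ℝ) *
                (Real.exp (-(c * x)) * (c * x) ^ (i + (j + 1)) / (Nat.factorial (i + (j + 1))))) := by
                ring
        have hnk : (0 : ℝ) ≤ ((j + 1 : ℕ) : ℝ) + k := by positivity
        calc (((j + 1 : ℕ) : ℝ) + k) *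
              (Real.exp (-(((m : ℝ) - k) * μ * x)) *
                (∫ u in (0 : ℝ)..x,
                  (c * u) ^ j / (Nat.factorial j) *
                    (Real.exp (-(μ * u)) - Real.exp (-(μ * x))) ^ k * c))
            ≤ (((j + 1 : ℕ) : ℝ) + k) *
              (1 - ∑ i ∈ Finset.range (j + 1),
                Real.exp (-(c * x)) * (c * x) ^ i / (Nat.factorial i)) := by
              refine mul_le_mul_of_nonneg_left ?_ hnk
              rw [← herl]
              exact hstepA
          _ ≤ (1 + (k : ℝ)) * (c * x - ∑ l ∈ Finset.range (j + 1), F l x) := htail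
      -- integrate the pointwise bound
      have hImono := integral_mono_of_nonneg
        ((hWnn (j + 1)).mono fun x hx => by
          simp only [Nat.add_sub_cancel] at hx
          exact mul_nonneg (by positivity) hx)
        ((hBint (j + 1)).const_mul (1 + (k : ℝ))) hpt
      rw [integral_const_mul, integral_const_mul] at hImono
      calc (((j + 1 : ℕ) : ℝ) + k) * ((m.choose k : ℝ) *
              ∫ x, Real.exp (-(((m : ℝ) - k) * μ * x)) *
                (∫ u in (0 : ℝ)..x,
                  (c * u) ^ j / (Nat.factorial j) *
                    (Real.exp (-(μ * u)) - Real.exp (-(μ * x))) ^ k * c) ∂A)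
          = (m.choose k : ℝ) * ((((j + 1 : ℕ) : ℝ) + k) *
              ∫ x, Real.exp (-(((m : ℝ) - k) * μ * x)) *
                (∫ u in (0 : ℝ)..x,
                  (c * u) ^ j / (Nat.factorial j) *
                    (Real.exp (-(μ * u)) - Real.exp (-(μ * x))) ^ k * c) ∂A) := by ring
        _ ≤ (m.choose k : ℝ) * ((1 + (k : ℝ)) *
              ∫ x, (c * x - ∑ l ∈ Finset.range (j + 1), F l x) ∂A) :=
            mul_le_mul_of_nonneg_left hImono (Nat.cast_nonneg _)
    · have := (hBlim.const_mul (1 + (k : ℝ))).const_mul ((m.choose k : ℝ))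
      simpa using this
  have := hpartial.add hksum
  simpa only [Finset.sum_const_zero, add_zero] using this
end

section
/- Let j ∈ {1, 2, 3} and assume the j-th moment is finite, ∫_0^∞ x^j dA(x) < ∞. Then for every k with 1 ≤ k ≤ m−1, (n+k)(n+k−1)⋯(n+k−j+1) · r_{k,m−k,n} → 0 as n → ∞ (the product in front of r_{k,m−k,n} consists of j consecutive factors starting with n+k). -/
open MeasureTheory Filter Topology

lemma gammaIntOn (c : ℝ) (hc : 0 < c) (q : ℕ) :
    IntegrableOn (fun u : ℝ => (c * u) ^ q * Real.exp (-(c * u)) * c) (Set.Ioi 0) := by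
  have h := integrableOn_rpow_mul_exp_neg_mul_rpow (p := 1) (s := q) (b := c)
    (lt_of_lt_of_le (by norm_num) (Nat.cast_nonneg q)) (by norm_num) hc
  simp_rw [Real.rpow_one, Real.rpow_natCast] at h
  have h2 : IntegrableOn (fun x : ℝ => c ^ q * c * (x ^ q * Real.exp (-c * x))) (Set.Ioi 0) :=
    h.const_mul _
  refine h2.congr_fun (fun u hu => ?_) measurableSet_Ioi
  beta_reduce; rw [neg_mul]; ring

lemma gammaIntVal (c : ℝ) (hc : 0 < c) (q : ℕ) :
    ∫ u in Set.Ioi (0:ℝ), (c * u) ^ q * Real.exp (-(c * u)) * c = (Nat.factorial q : ℝ) := by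
  have h := Real.integral_rpow_mul_exp_neg_mul_Ioi (a := (q : ℝ) + 1) (r := c)
    (by positivity) hc
  rw [add_sub_cancel_right] at h
  simp_rw [Real.rpow_natCast] at h
  rw [Real.Gamma_nat_eq_factorial q] at h
  have hrw : ∀ u ∈ Set.Ioi (0:ℝ),
      (c * u) ^ q * Real.exp (-(c * u)) * c = (c ^ q * c) * (u ^ q * Real.exp (-(c * u))) := by
    intro u _; ring
  rw [setIntegral_congr_fun measurableSet_Ioi hrw, integral_const_mul, h]
  have hpow : ((1:ℝ) / c) ^ ((q : ℝ) + 1) = 1 / c ^ (q + 1) := by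
    rw [show ((q:ℝ) + 1) = ((q + 1 : ℕ) : ℝ) by push_cast; ring, Real.rpow_natCast]
    rw [one_div, inv_pow, one_div]
  rw [hpow]
  rw [show c ^ q * c = c ^ (q+1) by rw [pow_succ]]
  field_simp

lemma factSplit (p N : ℕ) :
    ((Nat.factorial (N + p) : ℕ) : ℝ)
      = (∏ i ∈ Finset.range p, ((N : ℝ) + p - i)) * (Nat.factorial N : ℝ) := by
  induction p with
  | zero => simp
  | succ p ih =>
    have h2 : (∏ i ∈ Finset.range p, ((N : ℝ) + ((p:ℕ) + 1 : ℕ) - ((i + 1 : ℕ) : ℝ)))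
        = ∏ i ∈ Finset.range p, ((N : ℝ) + p - i) := by
      apply Finset.prod_congr rfl
      intro i hi; push_cast; ring
    have h3 : ((Nat.factorial (N + (p+1)) : ℕ) : ℝ)
        = (((N:ℝ) + p + 1)) * ((Nat.factorial (N + p) : ℕ) : ℝ) := by
      rw [show N + (p+1) = (N + p) + 1 by ring, Nat.factorial_succ]
      push_cast; ring
    rw [Finset.prod_range_succ']
    rw [h2, h3, ih]
    push_cast
    ring

lemma claimB (m k n : ℕ) (μ : ℝ) (x : ℝ) (hμ : 0 < μ) (hx : 0 ≤ x) :
    0 ≤ Real.exp (-(((m:ℝ) - k) * μ * x)) *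
      ∫ u in (0:ℝ)..x, ((m:ℝ) * μ * u) ^ (n-1) / (Nat.factorial (n-1) : ℝ) *
        (Real.exp (-(μ*u)) - Real.exp (-(μ*x)))^k * ((m:ℝ)*μ) := by
  apply mul_nonneg (Real.exp_pos _).le
  apply intervalIntegral.integral_nonneg hx
  intro u hu
  have hbase : 0 ≤ Real.exp (-(μ*u)) - Real.exp (-(μ*x)) := by
    rw [sub_nonneg]
    apply Real.exp_le_exp.mpr
    nlinarith [hu.1, hu.2]
  have h1 : (0:ℝ) ≤ ((m:ℝ) * μ * u) ^ (n-1) := by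
    apply pow_nonneg
    have hm' : (0:ℝ) ≤ (m:ℝ) := Nat.cast_nonneg m
    exact mul_nonneg (mul_nonneg hm' hμ.le) hu.1
  have : (0:ℝ) ≤ (m:ℝ) := Nat.cast_nonneg m
  have h2 : (0:ℝ) ≤ (m:ℝ) * μ := by positivity
  exact mul_nonneg (mul_nonneg (div_nonneg h1 (Nat.cast_nonneg _)) (pow_nonneg hbase k)) h2

lemma claimC (m k n p : ℕ) (μ : ℝ) (hμ : 0 < μ) (hm : 2 ≤ m) (hk : k ≤ m - 1)
    (hp : p ≤ n - 1) (x : ℝ) (hx : 0 ≤ x) :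
    Real.exp (-(((m:ℝ) - k) * μ * x)) *
      (∫ u in (0:ℝ)..x, ((m:ℝ) * μ * u) ^ (n-1) / (Nat.factorial (n-1) : ℝ) *
        (Real.exp (-(μ*u)) - Real.exp (-(μ*x)))^k * ((m:ℝ)*μ))
      ≤ ((m:ℝ) * μ * x)^p * ((Nat.factorial (n-1-p) : ℝ) / (Nat.factorial (n-1) : ℝ)) := by
  have hm0 : (0:ℝ) < m := by exact_mod_cast (by omega : 0 < m)
  set c : ℝ := (m:ℝ) * μ with hcdef
  have hc : 0 < c := mul_pos hm0 hμ
  have hmk : (1:ℝ) ≤ (m:ℝ) - k := by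
    have h1 : k + 1 ≤ m := by omega
    have h2 : ((k:ℝ) + 1) ≤ (m:ℝ) := by exact_mod_cast h1
    linarith
  set q := n - 1 - p with hqdef
  have hpq : p + q = n - 1 := by omega
  have hFpos : (0:ℝ) < (Nat.factorial (n-1) : ℝ) := by
    exact_mod_cast Nat.factorial_pos (n-1)
  rw [← intervalIntegral.integral_const_mul]
  have key : ∀ u ∈ Set.Icc (0:ℝ) x,
      Real.exp (-(((m:ℝ)-k)*μ*x)) * ((c*u)^(n-1) / (Nat.factorial (n-1):ℝ) *
          (Real.exp (-(μ*u)) - Real.exp (-(μ*x)))^k * c)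
        ≤ (c*x)^p / (Nat.factorial (n-1):ℝ) * ((c*u)^q * Real.exp (-(c*u)) * c) := by
    intro u hu
    obtain ⟨h0u, hux⟩ := hu
    have hexp1 : Real.exp (-(μ*x)) ≤ Real.exp (-(μ*u)) := Real.exp_le_exp.mpr (by nlinarith)
    have hbase : 0 ≤ Real.exp (-(μ*u)) - Real.exp (-(μ*x)) := sub_nonneg.mpr hexp1
    have hcu : 0 ≤ c * u := mul_nonneg hc.le h0u
    have step1 : Real.exp (-(((m:ℝ)-k)*μ*x)) * ((c*u)^(n-1) / (Nat.factorial (n-1):ℝ) *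
          (Real.exp (-(μ*u)) - Real.exp (-(μ*x)))^k * c)
        ≤ Real.exp (-(((m:ℝ)-k)*μ*u)) * ((c*u)^(n-1) / (Nat.factorial (n-1):ℝ) *
          (Real.exp (-(μ*u)))^k * c) := by
      have e1 : Real.exp (-(((m:ℝ)-k)*μ*x)) ≤ Real.exp (-(((m:ℝ)-k)*μ*u)) := by
        apply Real.exp_le_exp.mpr
        nlinarith [mul_nonneg (mul_nonneg (by linarith : (0:ℝ) ≤ (m:ℝ)-(k:ℝ)) hμ.le)
          (by linarith : (0:ℝ) ≤ x - u)]
      have e2 : (Real.exp (-(μ*u)) - Real.exp (-(μ*x)))^k ≤ (Real.exp (-(μ*u)))^k := by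
        apply pow_le_pow_left₀ hbase (by linarith [Real.exp_pos (-(μ*x))])
      have hB : (0:ℝ) ≤ (c*u)^(n-1) / (Nat.factorial (n-1):ℝ) := by positivity
      apply mul_le_mul e1 _ _ (Real.exp_pos _).le
      · apply mul_le_mul_of_nonneg_right _ hc.le
        exact mul_le_mul_of_nonneg_left e2 hB
      · apply mul_nonneg (mul_nonneg hB (pow_nonneg hbase k)) hc.le
    have hexpeq : Real.exp (-(((m:ℝ)-k)*μ*u)) * (Real.exp (-(μ*u)))^k
        = Real.exp (-(c*u)) := by
      rw [← Real.exp_nat_mul, ← Real.exp_add]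
      congr 1
      push_cast [hcdef]
      ring
    have step2 : Real.exp (-(((m:ℝ)-k)*μ*u)) * ((c*u)^(n-1) / (Nat.factorial (n-1):ℝ) *
          (Real.exp (-(μ*u)))^k * c)
        = (c*u)^(n-1) * Real.exp (-(c*u)) * c / (Nat.factorial (n-1):ℝ) := by
      rw [← hexpeq]; ring
    have step3 : (c*u)^(n-1) * Real.exp (-(c*u)) * c / (Nat.factorial (n-1):ℝ)
        ≤ (c*x)^p / (Nat.factorial (n-1):ℝ) * ((c*u)^q * Real.exp (-(c*u)) * c) := by
      have hsplit : (c*u)^(n-1) = (c*u)^p * (c*u)^q := by rw [← pow_add, hpq]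
      have hle : (c*u)^p ≤ (c*x)^p := pow_le_pow_left₀ hcu (by nlinarith) p
      have hG : 0 ≤ (c*u)^q * Real.exp (-(c*u)) * c :=
        mul_nonneg (mul_nonneg (pow_nonneg hcu q) (Real.exp_pos _).le) hc.le
      have hnum : (c*u)^p * ((c*u)^q * Real.exp (-(c*u)) * c)
          ≤ (c*x)^p * ((c*u)^q * Real.exp (-(c*u)) * c) :=
        mul_le_mul_of_nonneg_right hle hG
      calc (c*u)^(n-1) * Real.exp (-(c*u)) * c / (Nat.factorial (n-1):ℝ)
          = ((c*u)^p * ((c*u)^q * Real.exp (-(c*u)) * c)) / (Nat.factorial (n-1):ℝ) := by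
            rw [hsplit]; ring
        _ ≤ ((c*x)^p * ((c*u)^q * Real.exp (-(c*u)) * c)) / (Nat.factorial (n-1):ℝ) := by
            exact div_le_div_of_nonneg_right hnum hFpos.le
        _ = (c*x)^p / (Nat.factorial (n-1):ℝ) * ((c*u)^q * Real.exp (-(c*u)) * c) := by ring
    exact step1.trans (step2.le.trans step3)
  have int2 : IntervalIntegrable
      (fun u => (c*x)^p / (Nat.factorial (n-1):ℝ) * ((c*u)^q * Real.exp (-(c*u)) * c))
      MeasureTheory.volume 0 x := (Continuous.intervalIntegrable (by fun_prop) 0 x)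
  have int1 : IntervalIntegrable
      (fun u => Real.exp (-(((m:ℝ)-k)*μ*x)) * ((c*u)^(n-1) / (Nat.factorial (n-1):ℝ) *
        (Real.exp (-(μ*u)) - Real.exp (-(μ*x)))^k * c))
      MeasureTheory.volume 0 x := (Continuous.intervalIntegrable (by fun_prop) 0 x)
  have hged : ∫ u in (0:ℝ)..x, (c*u)^q * Real.exp (-(c*u)) * c ≤ (Nat.factorial q : ℝ) := by
    rw [intervalIntegral.integral_of_le hx]
    refine le_trans (setIntegral_mono_set (gammaIntOn c hc q) ?_ ?_)
      (le_of_eq (gammaIntVal c hc q))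
    · rw [EventuallyLE, ae_restrict_iff' measurableSet_Ioi]
      refine Filter.Eventually.of_forall (fun u hu => ?_)
      have hcu : 0 ≤ c * u := (mul_pos hc hu).le
      exact mul_nonneg (mul_nonneg (pow_nonneg hcu q) (Real.exp_pos _).le) hc.le
    · exact HasSubset.Subset.eventuallyLE Set.Ioc_subset_Ioi_self
  calc ∫ u in (0:ℝ)..x, Real.exp (-(((m:ℝ)-k)*μ*x)) * ((c*u)^(n-1) / (Nat.factorial (n-1):ℝ) *
        (Real.exp (-(μ*u)) - Real.exp (-(μ*x)))^k * c)
      ≤ ∫ u in (0:ℝ)..x, (c*x)^p / (Nat.factorial (n-1):ℝ) * ((c*u)^q * Real.exp (-(c*u)) * c) :=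
        intervalIntegral.integral_mono_on hx int1 int2 key
    _ = (c*x)^p / (Nat.factorial (n-1):ℝ) *
        ∫ u in (0:ℝ)..x, (c*u)^q * Real.exp (-(c*u)) * c := intervalIntegral.integral_const_mul _ _
    _ ≤ (c*x)^p / (Nat.factorial (n-1):ℝ) * (Nat.factorial q : ℝ) := by
        apply mul_le_mul_of_nonneg_left hged (by positivity)
    _ = (c*x)^p * ((Nat.factorial q : ℝ) / (Nat.factorial (n-1):ℝ)) := by ring

lemma prodBoundLarge (k j n : ℕ) (hn : j + 1 ≤ n) :
    |∏ i ∈ Finset.range j, ((n:ℝ) + k - i)|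
      ≤ ((k:ℝ) + 2)^j * ∏ i ∈ Finset.range j, ((n:ℝ) - 1 - i) := by
  have hterm : ∀ i ∈ Finset.range j, (0:ℝ) ≤ (n:ℝ) + k - i := by
    intro i hi
    rw [Finset.mem_range] at hi
    have h2 : ((i:ℝ) + 2) ≤ (n:ℝ) := by exact_mod_cast (show i + 2 ≤ n by omega)
    have hk0 : (0:ℝ) ≤ (k:ℝ) := Nat.cast_nonneg k
    linarith
  rw [abs_of_nonneg (Finset.prod_nonneg hterm)]
  have step : ∏ i ∈ Finset.range j, ((n:ℝ) + k - i)
      ≤ ∏ i ∈ Finset.range j, (((k:ℝ) + 2) * ((n:ℝ) - 1 - i)) := by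
    apply Finset.prod_le_prod hterm
    intro i hi
    rw [Finset.mem_range] at hi
    have h2 : ((i:ℝ) + 2) ≤ (n:ℝ) := by exact_mod_cast (show i + 2 ≤ n by omega)
    have hk0 : (0:ℝ) ≤ (k:ℝ) := Nat.cast_nonneg k
    nlinarith [mul_nonneg hk0 (by linarith : (0:ℝ) ≤ (n:ℝ) - 2 - i)]
  calc ∏ i ∈ Finset.range j, ((n:ℝ) + k - i)
      ≤ ∏ i ∈ Finset.range j, (((k:ℝ) + 2) * ((n:ℝ) - 1 - i)) := step
    _ = ((k:ℝ) + 2)^j * ∏ i ∈ Finset.range j, ((n:ℝ) - 1 - i) := by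
        rw [Finset.prod_mul_distrib, Finset.prod_const, Finset.card_range]

lemma prodBoundSmall (k j n : ℕ) (hn : n ≤ j) :
    |∏ i ∈ Finset.range j, ((n:ℝ) + k - i)| ≤ ((k:ℝ) + 2 * j)^j := by
  calc |∏ i ∈ Finset.range j, ((n:ℝ) + k - i)|
      = ∏ i ∈ Finset.range j, |(n:ℝ) + k - i| := Finset.abs_prod _ _
    _ ≤ ∏ i ∈ Finset.range j, ((k:ℝ) + 2 * j) := by
        apply Finset.prod_le_prod (fun i _ => abs_nonneg _)
        intro i hi
        rw [Finset.mem_range] at hi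
        have h1 : (n:ℝ) ≤ (j:ℝ) := by exact_mod_cast hn
        have h2 : (i:ℝ) ≤ (j:ℝ) := by exact_mod_cast hi.le
        have h3 : (0:ℝ) ≤ (n:ℝ) := Nat.cast_nonneg n
        have h4 : (0:ℝ) ≤ (i:ℝ) := Nat.cast_nonneg i
        have h5 : (0:ℝ) ≤ (k:ℝ) := Nat.cast_nonneg k
        have h6 : (0:ℝ) ≤ (j:ℝ) := Nat.cast_nonneg j
        rw [abs_le]
        constructor <;> linarith
    _ = ((k:ℝ) + 2 * j)^j := by rw [Finset.prod_const, Finset.card_range]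

noncomputable def bcG (m k n : ℕ) (μ : ℝ) (x : ℝ) : ℝ :=
  Real.exp (-(((m:ℝ) - k) * μ * x)) *
    ∫ u in (0:ℝ)..x, ((m:ℝ) * μ * u) ^ (n - 1) / (Nat.factorial (n - 1) : ℝ) *
      (Real.exp (-(μ * u)) - Real.exp (-(μ * x))) ^ k * ((m:ℝ) * μ)

lemma bcG_continuous (m k n : ℕ) (μ : ℝ) : Continuous (bcG m k n μ) := by
  unfold bcG
  apply Continuous.mul (by fun_prop)
  have h := intervalIntegral.continuous_parametric_intervalIntegral_of_continuous
    (μ := MeasureTheory.volume)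
    (f := fun (x : ℝ) (u : ℝ) => ((m:ℝ) * μ * u) ^ (n - 1) / (Nat.factorial (n - 1) : ℝ) *
      (Real.exp (-(μ * u)) - Real.exp (-(μ * x))) ^ k * ((m:ℝ) * μ))
    (a₀ := 0) ?_ (s := fun x => x) continuous_id
  · exact h
  · show Continuous fun p : ℝ × ℝ =>
      ((m:ℝ) * μ * p.2) ^ (n - 1) / (Nat.factorial (n - 1) : ℝ) *
        (Real.exp (-(μ * p.2)) - Real.exp (-(μ * p.1))) ^ k * ((m:ℝ) * μ)
    fun_prop

lemma ratioLemma (j N : ℕ) (hP : (0:ℝ) < ∏ i ∈ Finset.range j, ((N:ℝ) + (j:ℝ) + 1 - i)) :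
    (∏ i ∈ Finset.range j, ((N:ℝ) + (j:ℝ) + 1 - i)) *
      ((Nat.factorial N : ℝ) / (Nat.factorial (N + (j+1)) : ℝ)) = ((N:ℝ) + 1)⁻¹ := by
  have hfact : (Nat.factorial (N + (j+1)) : ℝ)
      = (∏ i ∈ Finset.range j, ((N:ℝ) + (j:ℝ) + 1 - i)) * (((N:ℝ) + 1) * (Nat.factorial N : ℝ)) := by
    have h := factSplit (j+1) N
    rw [Finset.prod_range_succ] at h
    have halign : ∏ i ∈ Finset.range j, ((N:ℝ) + ((j+1 : ℕ):ℝ) - i)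
        = ∏ i ∈ Finset.range j, ((N:ℝ) + (j:ℝ) + 1 - i) :=
      Finset.prod_congr rfl (fun i _ => by push_cast; ring)
    rw [halign] at h
    rw [h]
    push_cast
    ring
  have hFn : (0:ℝ) < (Nat.factorial N : ℝ) := by exact_mod_cast Nat.factorial_pos N
  have hN1 : (0:ℝ) < (N:ℝ) + 1 := by positivity
  rw [hfact]
  field_simp

theorem boundary_coefficient_vanishing'
    (m : ℕ) (hm : 2 ≤ m) (μ : ℝ) (hμ : 0 < μ)
    (A : Measure ℝ) [IsProbabilityMeasure A]
    (hsupp : A {x | x < 0} = 0)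
    (j : ℕ)
    (hmom : Integrable (fun x => x ^ j) A) :
    ∀ k : ℕ, 1 ≤ k → k ≤ m - 1 →
      Tendsto
        (fun n : ℕ =>
          (∏ i ∈ Finset.range j, ((n : ℝ) + k - i)) *
            ((m.choose k : ℝ) *
              ∫ x, Real.exp (-(((m : ℝ) - k) * μ * x)) *
                (∫ u in (0 : ℝ)..x,
                  (m * μ * u) ^ (n - 1) / (Nat.factorial (n - 1)) *
                    (Real.exp (-(μ * u)) - Real.exp (-(μ * x))) ^ k * (m * μ)) ∂A))
        atTop (𝓝 0) := by
  intro k hk1 hk2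
  have hm0 : (0:ℝ) < m := by exact_mod_cast (by omega : 0 < m)
  have hc : (0:ℝ) < (m:ℝ) * μ := mul_pos hm0 hμ
  have hC : (0:ℝ) ≤ (m.choose k : ℝ) := Nat.cast_nonneg _
  have hae : ∀ᵐ x ∂A, 0 ≤ x := by
    rw [ae_iff]
    have hset : {x : ℝ | ¬ 0 ≤ x} = {x | x < 0} := by ext x; simp [not_le]
    rw [hset]; exact hsupp
  set C : ℝ := (m.choose k : ℝ) with hCdef
  set D1 : ℝ := C * ((k:ℝ) + 2 * j)^j with hD1
  set D2 : ℝ := C * ((k:ℝ) + 2)^j * ((m:ℝ) * μ)^j with hD2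
  have hD1nn : 0 ≤ D1 := by positivity
  have hD2nn : 0 ≤ D2 := by positivity
  have hbint : Integrable (fun x : ℝ => D1 + D2 * x ^ j) A :=
    (integrable_const D1).add (hmom.const_mul D2)
  have hmeas : ∀ n : ℕ, AEStronglyMeasurable
      (fun x => ((∏ i ∈ Finset.range j, ((n : ℝ) + k - i)) * C) * bcG m k n μ x) A :=
    fun n => (continuous_const.mul (bcG_continuous m k n μ)).aestronglyMeasurable
  -- domination
  have hb : ∀ n : ℕ, ∀ᵐ x ∂A,
      ‖((∏ i ∈ Finset.range j, ((n : ℝ) + k - i)) * C) * bcG m k n μ x‖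
        ≤ D1 + D2 * x ^ j := by
    intro n
    filter_upwards [hae] with x hx
    have hG0 : 0 ≤ bcG m k n μ x := claimB m k n μ x hμ hx
    have habs : ‖((∏ i ∈ Finset.range j, ((n : ℝ) + k - i)) * C) * bcG m k n μ x‖
        = (|∏ i ∈ Finset.range j, ((n : ℝ) + k - i)| * C) * bcG m k n μ x := by
      rw [Real.norm_eq_abs, abs_mul, abs_mul, abs_of_nonneg hC, abs_of_nonneg hG0]
    rw [habs]
    rcases le_or_gt n j with hnj | hjn
    · -- small n
      have h1 := prodBoundSmall k j n hnj
      have hF : (Nat.factorial (n-1) : ℝ) ≠ 0 := by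
        exact_mod_cast (Nat.factorial_pos (n-1)).ne'
      have h2' : bcG m k n μ x ≤ ((m:ℝ) * μ * x)^0 *
          ((Nat.factorial (n - 1 - 0) : ℝ) / (Nat.factorial (n - 1) : ℝ)) :=
        claimC m k n 0 μ hμ hm hk2 (by omega) x hx
      have heq : ((m:ℝ) * μ * x)^0 *
          ((Nat.factorial (n - 1 - 0) : ℝ) / (Nat.factorial (n - 1) : ℝ)) = 1 := by
        simp [Nat.sub_zero, div_self hF]
      have h2 : bcG m k n μ x ≤ 1 := heq ▸ h2'
      have hxj : 0 ≤ D2 * x ^ j := by positivity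
      calc (|∏ i ∈ Finset.range j, ((n : ℝ) + k - i)| * C) * bcG m k n μ x
          ≤ (((k:ℝ) + 2 * j)^j * C) * 1 :=
            mul_le_mul (mul_le_mul_of_nonneg_right h1 hC) h2 hG0 (by positivity)
        _ = D1 := by rw [hD1]; ring
        _ ≤ D1 + D2 * x ^ j := by linarith
    · -- large n
      obtain ⟨N, rfl⟩ : ∃ N, n = N + (j+1) := ⟨n - (j+1), by omega⟩
      have h1 := prodBoundLarge k j (N + (j+1)) (by omega)
      have h2 := claimC m k (N + (j+1)) j μ hμ hm hk2 (by omega) x hx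
      rw [show N + (j+1) - 1 = N + j from by omega,
        show N + j - j = N from by omega] at h2
      have halign : ∏ i ∈ Finset.range j, (((N + (j+1) : ℕ):ℝ) - 1 - i)
          = ∏ i ∈ Finset.range j, ((N:ℝ) + (j:ℝ) - i) :=
        Finset.prod_congr rfl (fun i _ => by push_cast; ring)
      rw [halign] at h1
      have hPnn : 0 ≤ ∏ i ∈ Finset.range j, ((N:ℝ) + (j:ℝ) - i) := by
        apply Finset.prod_nonneg
        intro i hi
        rw [Finset.mem_range] at hi
        have : (i:ℝ) ≤ (j:ℝ) := by exact_mod_cast hi.le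
        have : (0:ℝ) ≤ (N:ℝ) := Nat.cast_nonneg N
        have h' : (i:ℝ) ≤ (j:ℝ) := by exact_mod_cast hi.le
        linarith
      have hratio : (∏ i ∈ Finset.range j, ((N:ℝ) + (j:ℝ) - i)) *
          ((Nat.factorial N : ℝ) / (Nat.factorial (N + j) : ℝ)) = 1 := by
        have h := factSplit j N
        have hFp : (0:ℝ) < (Nat.factorial (N + j) : ℝ) := by
          exact_mod_cast Nat.factorial_pos (N + j)
        rw [h]
        have hFn : (0:ℝ) < (Nat.factorial N : ℝ) := by exact_mod_cast Nat.factorial_pos N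
        have hPpos : (0:ℝ) < ∏ i ∈ Finset.range j, ((N:ℝ) + (j:ℝ) - i) := by
          apply Finset.prod_pos
          intro i hi
          rw [Finset.mem_range] at hi
          have h' : (i:ℝ) + 1 ≤ (j:ℝ) := by exact_mod_cast hi
          have h'' : (0:ℝ) ≤ (N:ℝ) := Nat.cast_nonneg N
          linarith
        field_simp
      calc (|∏ i ∈ Finset.range j, (((N + (j+1) : ℕ):ℝ) + k - i)| * C) * bcG m k (N + (j+1)) μ x
          ≤ ((((k:ℝ) + 2)^j * ∏ i ∈ Finset.range j, ((N:ℝ) + (j:ℝ) - i)) * C) *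
            (((m:ℝ) * μ * x)^j * ((Nat.factorial N : ℝ) / (Nat.factorial (N + j) : ℝ))) :=
            mul_le_mul (mul_le_mul_of_nonneg_right h1 hC) h2 hG0 (by positivity)
        _ = D2 * x ^ j * ((∏ i ∈ Finset.range j, ((N:ℝ) + (j:ℝ) - i)) *
            ((Nat.factorial N : ℝ) / (Nat.factorial (N + j) : ℝ))) := by
            rw [hD2, mul_pow, mul_pow]; ring
        _ = D2 * x ^ j := by rw [hratio, mul_one]
        _ ≤ D1 + D2 * x ^ j := by linarith
  -- pointwise limit
  have hl : ∀ᵐ x ∂A, Tendsto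
      (fun n : ℕ => ((∏ i ∈ Finset.range j, ((n : ℝ) + k - i)) * C) * bcG m k n μ x)
      atTop (𝓝 ((fun _ : ℝ => (0:ℝ)) x)) := by
    filter_upwards [hae] with x hx
    have hconst : (0:ℝ) ≤ C * ((k:ℝ) + 2)^j * ((m:ℝ) * μ * x)^(j+1) := by positivity
    apply squeeze_zero_norm' (a := fun n : ℕ =>
      (C * ((k:ℝ) + 2)^j * ((m:ℝ) * μ * x)^(j+1)) * ((n:ℝ) - 1 - j)⁻¹)
    · filter_upwards [eventually_ge_atTop (j+2)] with n hn
      obtain ⟨N, rfl⟩ : ∃ N, n = N + (j+2) := ⟨n - (j+2), by omega⟩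
      have hG0 : 0 ≤ bcG m k (N + (j+2)) μ x := claimB m k (N + (j+2)) μ x hμ hx
      have h1 := prodBoundLarge k j (N + (j+2)) (by omega)
      have h2 := claimC m k (N + (j+2)) (j+1) μ hμ hm hk2 (by omega) x hx
      rw [show N + (j+2) - 1 = N + (j+1) from by omega,
        show N + (j+1) - (j+1) = N from by omega] at h2
      have halign : ∏ i ∈ Finset.range j, (((N + (j+2) : ℕ):ℝ) - 1 - i)
          = ∏ i ∈ Finset.range j, ((N:ℝ) + (j:ℝ) + 1 - i) :=
        Finset.prod_congr rfl (fun i _ => by push_cast; ring)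
      rw [halign] at h1
      have hPpos : (0:ℝ) < ∏ i ∈ Finset.range j, ((N:ℝ) + (j:ℝ) + 1 - i) := by
        apply Finset.prod_pos
        intro i hi
        rw [Finset.mem_range] at hi
        have h' : (i:ℝ) ≤ (j:ℝ) := by exact_mod_cast hi.le
        have h'' : (0:ℝ) ≤ (N:ℝ) := Nat.cast_nonneg N
        linarith
      have hratio := ratioLemma j N hPpos
      have habs : ‖((∏ i ∈ Finset.range j, (((N + (j+2) : ℕ):ℝ) + k - i)) * C) *
          bcG m k (N + (j+2)) μ x‖
          = (|∏ i ∈ Finset.range j, (((N + (j+2) : ℕ):ℝ) + k - i)| * C) *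
            bcG m k (N + (j+2)) μ x := by
        rw [Real.norm_eq_abs, abs_mul, abs_mul, abs_of_nonneg hC, abs_of_nonneg hG0]
      rw [habs]
      have hNcast : (((N + (j+2) : ℕ):ℝ) - 1 - (j:ℝ)) = (N:ℝ) + 1 := by push_cast; ring
      rw [hNcast]
      calc (|∏ i ∈ Finset.range j, (((N + (j+2) : ℕ):ℝ) + k - i)| * C) * bcG m k (N + (j+2)) μ x
          ≤ ((((k:ℝ) + 2)^j * ∏ i ∈ Finset.range j, ((N:ℝ) + (j:ℝ) + 1 - i)) * C) *
            (((m:ℝ) * μ * x)^(j+1) * ((Nat.factorial N : ℝ) / (Nat.factorial (N + (j+1)) : ℝ))) :=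
            mul_le_mul (mul_le_mul_of_nonneg_right h1 hC) h2 hG0 (by positivity)
        _ = (C * ((k:ℝ) + 2)^j * ((m:ℝ) * μ * x)^(j+1)) *
            ((∏ i ∈ Finset.range j, ((N:ℝ) + (j:ℝ) + 1 - i)) *
              ((Nat.factorial N : ℝ) / (Nat.factorial (N + (j+1)) : ℝ))) := by ring
        _ = (C * ((k:ℝ) + 2)^j * ((m:ℝ) * μ * x)^(j+1)) * ((N:ℝ) + 1)⁻¹ := by rw [hratio]
    · have h1 : Tendsto (fun n : ℕ => (n:ℝ) - 1 - j) atTop atTop := by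
        have h0 : Tendsto (fun n : ℕ => (n:ℝ) + (-1 - j)) atTop atTop :=
          tendsto_atTop_add_const_right atTop _ tendsto_natCast_atTop_atTop
        refine h0.congr (fun n => by ring)
      have h2 : Tendsto (fun n : ℕ => ((n:ℝ) - 1 - j)⁻¹) atTop (𝓝 0) :=
        h1.inv_tendsto_atTop
      have h3 := h2.const_mul (C * ((k:ℝ) + 2)^j * ((m:ℝ) * μ * x)^(j+1))
      simpa using h3
  have hDCT := MeasureTheory.tendsto_integral_of_dominated_convergence
    (μ := A) (F := fun (n : ℕ) (x : ℝ) =>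
      ((∏ i ∈ Finset.range j, ((n : ℝ) + k - i)) * C) * bcG m k n μ x)
    (f := fun _ : ℝ => (0:ℝ)) (fun x => D1 + D2 * x ^ j) hmeas hbint hb hl
  rw [MeasureTheory.integral_zero] at hDCT
  refine hDCT.congr fun n => ?_
  rw [MeasureTheory.integral_const_mul, mul_assoc]
  rfl

/-- Vanishing of the boundary coefficients (Section 5): if `j ∈ {1,2,3}` and the `j`-th moment
of `A` is finite, then for each `1 ≤ k ≤ m-1`,
`(n+k)(n+k-1)⋯(n+k-j+1) r_{k,m-k,n} → 0` as `n → ∞`. -/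
theorem boundary_coefficient_vanishing
    (m : ℕ) (hm : 2 ≤ m) (μ : ℝ) (hμ : 0 < μ)
    (A : Measure ℝ) [IsProbabilityMeasure A]
    (hsupp : A {x | x < 0} = 0)
    (j : ℕ) (hj : j ∈ ({1, 2, 3} : Finset ℕ))
    (hmom : Integrable (fun x => x ^ j) A) :
    ∀ k : ℕ, 1 ≤ k → k ≤ m - 1 →
      Tendsto
        (fun n : ℕ =>
          (∏ i ∈ Finset.range j, ((n : ℝ) + k - i)) *
            ((m.choose k : ℝ) *
              ∫ x, Real.exp (-(((m : ℝ) - k) * μ * x)) *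
                (∫ u in (0 : ℝ)..x,
                  (m * μ * u) ^ (n - 1) / (Nat.factorial (n - 1)) *
                    (Real.exp (-(μ * u)) - Real.exp (-(μ * x))) ^ k * (m * μ)) ∂A))
        atTop (𝓝 0) :=
  boundary_coefficient_vanishing' m hm μ hμ A hsupp j hmom
end
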